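/- Fix θ ∈ (0,1), θ ≠ 1/2, and an integer d ≥ 0. Consider nonnegative reals n₀,...,n_d with Σ n_s = k and n_s ≤ 2^s for all s. Then Σ_{s=0}^{d} n_s θ^s ≤ ((2θ)^{log₂(k+1)} - 1)/(2θ - 1). -/

import Mathlib

open Real Set

lemma rpow_convexOn_neg {c : ℝ} (hc : c < 0) :
    ConvexOn ℝ (Set.Ioi (0:ℝ)) fun x : ℝ => x ^ c := by
  have hopen : interior (Set.Ioi (0:ℝ)) = Set.Ioi 0 := interior_Ioi
  have hderiv : Set.EqOn (deriv fun x : ℝ => x ^ c) (fun x : ℝ => c * x ^ (c-1)) (Set.Ioi 0) := by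
    intro x hx
    exact (Real.hasDerivAt_rpow_const (Or.inl (ne_of_gt hx))).deriv
  apply convexOn_of_deriv2_nonneg (convex_Ioi 0)
  · intro x hx
    exact (Real.hasDerivAt_rpow_const (Or.inl (ne_of_gt hx))).continuousAt.continuousWithinAt
  · rw [hopen]
    intro x hx
    exact (Real.hasDerivAt_rpow_const (Or.inl (ne_of_gt hx))).differentiableAt.differentiableWithinAt
  · rw [hopen]
    apply DifferentiableOn.congr (f := fun x : ℝ => c * x ^ (c-1)) _ hderiv
    intro x hx
    exact (((Real.hasDerivAt_rpow_const (p := c-1) (Or.inl (ne_of_gt hx))).const_mul c)).differentiableAt.differentiableWithinAt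
  · rw [hopen]
    intro x hx
    have hev : deriv (fun x : ℝ => x ^ c) =ᶠ[nhds x] fun x : ℝ => c * x ^ (c-1) :=
      Filter.eventuallyEq_of_mem (IsOpen.mem_nhds isOpen_Ioi hx) hderiv
    have : deriv^[2] (fun x : ℝ => x ^ c) x = deriv (fun x : ℝ => c * x ^ (c-1)) x := by
      simp only [Function.iterate_succ, Function.iterate_zero, Function.comp_apply, Function.id_def]
      exact Filter.EventuallyEq.deriv_eq hev
    rw [this, (((Real.hasDerivAt_rpow_const (p := c-1) (Or.inl (ne_of_gt hx))).const_mul c)).deriv]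
    have hx' : (0:ℝ) < x := hx
    have : (0:ℝ) < x ^ (c-1-1) := Real.rpow_pos_of_pos hx' _
    nlinarith [mul_pos (mul_pos (neg_pos.mpr hc) (show (0:ℝ) < 1 - c by linarith)) this]

lemma fourpt_concave {s : Set ℝ} {f : ℝ → ℝ} (hf : ConcaveOn ℝ s f) {a b t : ℝ}
    (ha : a ∈ s) (hb : b + t ∈ s) (hab : a ≤ b) (ht : 0 ≤ t) :
    f a + f (b + t) ≤ f b + f (a + t) := by
  have hL0 : 0 ≤ b + t - a := by linarith
  rcases eq_or_lt_of_le hL0 with hL | hL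
  · have h1 : a = b := by linarith
    have h2 : t = 0 := by linarith
    rw [h1, h2, add_zero, add_comm]
  · have hLne : b + t - a ≠ 0 := ne_of_gt hL
    set p := (b - a) / (b + t - a) with hp
    set q := t / (b + t - a) with hq
    have hp0 : 0 ≤ p := div_nonneg (by linarith) hL0
    have hq0 : 0 ≤ q := div_nonneg ht hL0
    have hpq : p + q = 1 := by
      rw [hp, hq, ← add_div, show b - a + t = b + t - a by ring]
      exact div_self hLne
    have e1 : p * a + q * (b + t) = a + t := by
      rw [hp, hq]; field_simp; ring
    have e2 : q * a + p * (b + t) = b := by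
      rw [hp, hq]; field_simp; ring
    have h1 := hf.2 ha hb hp0 hq0 hpq
    have h2 := hf.2 ha hb hq0 hp0 (by linarith)
    simp only [smul_eq_mul] at h1 h2
    rw [e1] at h1
    rw [e2] at h2
    have hexp : p * f a + q * f (b + t) + (q * f a + p * f (b + t)) = f a + f (b + t) := by
      have h3 : (p + q) * (f a + f (b + t)) = f a + f (b + t) := by rw [hpq]; ring
      rw [← h3]; ring
    linarith

lemma fourpt_convex {s : Set ℝ} {f : ℝ → ℝ} (hf : ConvexOn ℝ s f) {a b t : ℝ}
    (ha : a ∈ s) (hb : b + t ∈ s) (hab : a ≤ b) (ht : 0 ≤ t) :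
    f b + f (a + t) ≤ f a + f (b + t) := by
  have := fourpt_concave hf.neg ha hb hab ht
  simp only [Pi.neg_apply] at this
  linarith

lemma chord_pos {c : ℝ} (hc0 : 0 < c) (hc1 : c < 1) {x : ℝ} (h1 : 1 ≤ x) (h2 : x ≤ 2) :
    1 + ((2:ℝ)^c - 1) * (x - 1) ≤ x ^ c := by
  have hcon := Real.concaveOn_rpow hc0.le hc1.le
  have h := hcon.2 (show (1:ℝ) ∈ Ici 0 by norm_num) (show (2:ℝ) ∈ Ici 0 by norm_num)
      (show (0:ℝ) ≤ 2 - x by linarith) (show (0:ℝ) ≤ x - 1 by linarith)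
      (show (2 - x) + (x - 1) = 1 by ring)
  simp only [smul_eq_mul, Real.one_rpow, mul_one] at h
  rw [show 2 - x + (x - 1) * 2 = x by ring] at h
  linarith

lemma chord_neg {c : ℝ} (hc : c < 0) {x : ℝ} (h1 : 1 ≤ x) (h2 : x ≤ 2) :
    x ^ c ≤ 1 + ((2:ℝ)^c - 1) * (x - 1) := by
  have hcon := rpow_convexOn_neg hc
  have h := hcon.2 (show (1:ℝ) ∈ Ioi 0 by norm_num) (show (2:ℝ) ∈ Ioi 0 by norm_num)
      (show (0:ℝ) ≤ 2 - x by linarith) (show (0:ℝ) ≤ x - 1 by linarith)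
      (show (2 - x) + (x - 1) = 1 by ring)
  simp only [smul_eq_mul, Real.one_rpow, mul_one] at h
  rw [show 2 - x + (x - 1) * 2 = x by ring] at h
  linarith

lemma key_pos {c : ℝ} (hc0 : 0 < c) (hc1 : c < 1) {X t : ℝ} (hX : 1 ≤ X)
    (ht0 : 0 ≤ t) (ht1 : t ≤ 1) (hXt : 2 ≤ X + t) :
    (X + t) ^ c - X ^ c ≤ ((2:ℝ)^c - 1) * t := by
  have hcon := Real.concaveOn_rpow hc0.le hc1.le
  have h4 := fourpt_concave hcon (a := 2 - t) (b := X) (t := t)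
      (show (2:ℝ) - t ∈ Ici 0 by simp; linarith) (show X + t ∈ Ici 0 by simp; linarith)
      (by linarith) ht0
  rw [show 2 - t + t = (2:ℝ) by ring] at h4
  have hch := chord_pos hc0 hc1 (show (1:ℝ) ≤ 2 - t by linarith) (by linarith)
  linarith

lemma key_neg {c : ℝ} (hc : c < 0) {X t : ℝ} (hX : 1 ≤ X)
    (ht0 : 0 ≤ t) (ht1 : t ≤ 1) (hXt : 2 ≤ X + t) :
    ((2:ℝ)^c - 1) * t ≤ (X + t) ^ c - X ^ c := by
  have hcon := rpow_convexOn_neg hc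
  have h4 := fourpt_convex hcon (a := 2 - t) (b := X) (t := t)
      (show (2:ℝ) - t ∈ Ioi 0 by simp; linarith) (show X + t ∈ Ioi 0 by simp; linarith)
      (by linarith) ht0
  rw [show 2 - t + t = (2:ℝ) by ring] at h4
  have hch := chord_neg hc (show (1:ℝ) ≤ 2 - t by linarith) (by linarith)
  linarith

lemma mainlem (θ c : ℝ) (hθ0 : 0 < θ) (hθ1 : θ < 1) (h2c : (2:ℝ)^c = 2*θ)
    (hsgn : 0 < c ∨ c < 0) (hc1 : c < 1) :
    ∀ d : ℕ, ∀ (k : ℝ) (n : ℕ → ℝ), (∀ s, 0 ≤ n s) → (∀ s, n s ≤ 2^s) →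
    (∑ s ∈ Finset.range (d+1), n s = k) →
    ∑ s ∈ Finset.range (d+1), n s * θ^s ≤ ((k+1)^c - 1)/(2*θ-1) := by
  have hDpos : 0 < c → 0 < 2*θ - 1 := by
    intro hc
    have : (1:ℝ) < 2 ^ c := Real.one_lt_rpow_iff_of_pos (by norm_num) |>.mpr (Or.inl ⟨one_lt_two, hc⟩)
    rw [h2c] at this; linarith
  have hDneg : c < 0 → 2*θ - 1 < 0 := by
    intro hc
    have : (2:ℝ) ^ c < 1 := Real.rpow_lt_one_of_one_lt_of_neg one_lt_two hc
    rw [h2c] at this; linarith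
  have hDne : 2*θ - 1 ≠ 0 := by
    rcases hsgn with hc | hc
    · exact ne_of_gt (hDpos hc)
    · exact ne_of_lt (hDneg hc)
  have hdiv : ∀ U V : ℝ, (0 < c → U ≤ V) → (c < 0 → V ≤ U) →
      U / (2*θ-1) ≤ V / (2*θ-1) := by
    intro U V hUV hVU
    rcases hsgn with hc | hc
    · exact (div_le_div_iff_of_pos_right (hDpos hc)).mpr (hUV hc)
    · exact (div_le_div_right_of_neg (hDneg hc)).mpr (hVU hc)
  intro d
  induction d with
  | zero =>
    intro k n hn0 hn2 hsum
    rw [Finset.sum_range_one] at hsum ⊢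
    have hk0 : 0 ≤ k := hsum ▸ hn0 0
    have hk1 : k ≤ 1 := by have := hn2 0; rw [pow_zero] at this; linarith [hsum]
    rw [pow_zero, mul_one, hsum]
    rcases hsgn with hc | hc
    · rw [le_div_iff₀ (hDpos hc)]
      have hch := chord_pos hc hc1 (show (1:ℝ) ≤ k + 1 by linarith) (by linarith)
      rw [show k + 1 - 1 = k by ring, h2c] at hch
      linarith
    · rw [le_div_iff_of_neg (hDneg hc)]
      have hch := chord_neg hc (show (1:ℝ) ≤ k + 1 by linarith) (by linarith)
      rw [show k + 1 - 1 = k by ring, h2c] at hch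
      linarith
  | succ d ih =>
    intro k n hn0 hn2 hsum
    set a := n 0 with ha_def
    have ha0 : 0 ≤ a := hn0 0
    have ha1 : a ≤ 1 := by have := hn2 0; rwa [pow_zero] at this
    have hsplit : ∑ s ∈ Finset.range (d+1+1), n s * θ^s
        = (∑ i ∈ Finset.range (d+1), n (i+1) * θ^(i+1)) + n 0 * θ^0 :=
      Finset.sum_range_succ' _ _
    have hsumsplit : (∑ i ∈ Finset.range (d+1), n (i+1)) + n 0 = k := by
      rw [← hsum]; exact (Finset.sum_range_succ' _ _).symm
    have hrest : 0 ≤ ∑ i ∈ Finset.range (d+1), n (i+1) :=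
      Finset.sum_nonneg fun i _ => hn0 (i+1)
    have hak : a ≤ k := by linarith
    have hk0 : 0 ≤ k := le_trans ha0 hak
    set k' := (k - a) / 2 with hk'_def
    have hk'0 : 0 ≤ k' := by rw [hk'_def]; apply div_nonneg (by linarith) (by norm_num)
    have hmsum : ∑ i ∈ Finset.range (d+1), n (i+1) / 2 = k' := by
      rw [← Finset.sum_div, hk'_def]
      congr 1
      linarith
    have hIH := ih k' (fun t => n (t+1) / 2)
        (fun t => div_nonneg (hn0 (t+1)) (by norm_num))
        (fun t => by
          have := hn2 (t+1)
          have h2t : (2:ℝ)^(t+1) = 2^t * 2 := pow_succ 2 t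
          rw [div_le_iff₀ (by norm_num : (0:ℝ) < 2)]
          linarith)
        hmsum
    set S := ∑ i ∈ Finset.range (d+1), n (i+1) / 2 * θ^i with hS_def
    have hLHS : ∑ i ∈ Finset.range (d+1), n (i+1) * θ^(i+1) = 2*θ*S := by
      rw [hS_def, Finset.mul_sum]
      apply Finset.sum_congr rfl
      intro i _
      rw [pow_succ]
      ring
    set P := (k'+1)^c with hP_def
    set Q := (k+1)^c with hQ_def
    have hR : (2*(k'+1))^c = 2^c * P := by
      rw [hP_def, Real.mul_rpow (by norm_num) (by linarith)]
    have heq : k + 1 + (1 - a) = 2*(k'+1) := by rw [hk'_def]; ring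
    have hkey : (0 < c → 2*θ*P ≤ Q + (2*θ-1)*(1-a)) ∧ (c < 0 → Q + (2*θ-1)*(1-a) ≤ 2*θ*P) := by
      constructor
      · intro hc
        have hk := key_pos hc hc1 (show (1:ℝ) ≤ k+1 by linarith) (show (0:ℝ) ≤ 1-a by linarith)
          (show 1-a ≤ 1 by linarith) (show (2:ℝ) ≤ k+1+(1-a) by linarith)
        rw [heq, hR, h2c] at hk
        rw [hQ_def]
        linarith
      · intro hc
        have hk := key_neg hc (show (1:ℝ) ≤ k+1 by linarith) (show (0:ℝ) ≤ 1-a by linarith)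
          (show 1-a ≤ 1 by linarith) (show (2:ℝ) ≤ k+1+(1-a) by linarith)
        rw [heq, hR, h2c] at hk
        rw [hQ_def]
        linarith
    have h1 : 2*θ*S ≤ (2*θ*P - 2*θ)/(2*θ-1) := by
      have hmul : 2*θ*S ≤ 2*θ*((P-1)/(2*θ-1)) :=
        mul_le_mul_of_nonneg_left hIH (by linarith)
      have heq2 : 2*θ*((P-1)/(2*θ-1)) = (2*θ*P - 2*θ)/(2*θ-1) := by
        field_simp
      linarith [heq2 ▸ hmul]
    have h2 : (2*θ*P - 2*θ)/(2*θ-1) ≤ (Q - 1 - a*(2*θ-1))/(2*θ-1) := by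
      apply hdiv
      · intro hc; have := hkey.1 hc; linarith
      · intro hc; have := hkey.2 hc; linarith
    have h3 : (Q - 1 - a*(2*θ-1))/(2*θ-1) = (Q-1)/(2*θ-1) - a := by
      field_simp
    rw [hsplit, hLHS, pow_zero, mul_one]
    linarith

theorem stmt5 (θ : ℝ) (hθ : θ ∈ Set.Ioo (0:ℝ) 1) (hθ2 : θ ≠ 1/2)
    (d : ℕ) (k : ℝ) (hk : 1 ≤ k) (n : ℕ → ℝ)
    (hn0 : ∀ s, 0 ≤ n s) (hn2 : ∀ s, n s ≤ 2 ^ s)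
    (hsum : ∑ s ∈ Finset.range (d+1), n s = k) :
    ∑ s ∈ Finset.range (d+1), n s * θ ^ s
      ≤ ((2*θ) ^ (Real.logb 2 (k+1)) - 1) / (2*θ - 1) := by
  obtain ⟨hθ0, hθ1⟩ := hθ
  set c := Real.logb 2 (2*θ) with hc_def
  have h2θ : (0:ℝ) < 2*θ := by linarith
  have h2c : (2:ℝ)^c = 2*θ := Real.rpow_logb (by norm_num) (by norm_num) h2θ
  have hsgn : 0 < c ∨ c < 0 := by
    rcases lt_or_gt_of_ne hθ2 with h | h
    · right
      exact Real.logb_neg (by norm_num) (by linarith) (by linarith)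
    · left
      exact Real.logb_pos (by norm_num) (by linarith)
  have hc1 : c < 1 := by
    have h1 : Real.logb 2 (2*θ) < Real.logb 2 2 :=
      Real.logb_lt_logb (by norm_num) (by linarith) (by linarith)
    have h2 : Real.logb 2 2 = 1 := Real.logb_self_eq_one (by norm_num)
    rw [hc_def, ← h2]; exact h1
  have hk1 : (0:ℝ) < k + 1 := by linarith
  have hRHS : (2*θ) ^ (Real.logb 2 (k+1)) = (k+1)^c := by
    rw [← h2c, ← Real.rpow_mul (by norm_num : (0:ℝ) ≤ 2), mul_comm,
      Real.rpow_mul (by norm_num : (0:ℝ) ≤ 2),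
      Real.rpow_logb (by norm_num) (by norm_num) hk1]
  rw [hRHS]
  exact mainlem θ c hθ0 hθ1 h2c hsgn hc1 d k n hn0 hn2 hsum
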